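/- Let L > 0 and T > 0, and let φ be a classical solution on [0,L]×[0,T] of the adjoint linear KdV system φ_t + φ_x + φ_{xxx} = 0 with boundary conditions φ(L,t) = 0, φ_x(L,t) = 0 and φ(0,t) + φ_{xx}(0,t) = 0 for all t ∈ [0,T]. Then ∫₀^L φ(x,0)² dx ≤ (1/T) ∫₀^T ∫₀^L φ(x,t)² dx dt + ∫₀^T φ_x(0,t)² dt + ∫₀^T φ(0,t)² dt. -/

import Mathlib

open MeasureTheory Set

/-- **Initial-datum estimate for the adjoint linear KdV system.**
If `φ` is a classical solution of `φ_t + φ_x + φ_{xxx} = 0` on `[0,L] × [0,T]`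
with boundary conditions `φ(L,t) = 0`, `φ_x(L,t) = 0`, `φ(0,t) + φ_{xx}(0,t) = 0`, then
`∫₀^L φ(x,0)² dx ≤ (1/T) ∫₀^T ∫₀^L φ² dx dt + ∫₀^T φ_x(0,t)² dt + ∫₀^T φ(0,t)² dt`. -/
theorem adjoint_kdv_initial_estimate
    (L T : ℝ) (hL : 0 < L) (hT : 0 < T)
    (φ φt φx φxx φxxx : ℝ → ℝ → ℝ)
    (hφt : ∀ x ∈ Icc (0:ℝ) L, ∀ t ∈ Icc (0:ℝ) T,
      HasDerivAt (fun s => φ x s) (φt x t) t)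
    (hφx : ∀ x ∈ Icc (0:ℝ) L, ∀ t ∈ Icc (0:ℝ) T,
      HasDerivAt (fun y => φ y t) (φx x t) x)
    (hφxx : ∀ x ∈ Icc (0:ℝ) L, ∀ t ∈ Icc (0:ℝ) T,
      HasDerivAt (fun y => φx y t) (φxx x t) x)
    (hφxxx : ∀ x ∈ Icc (0:ℝ) L, ∀ t ∈ Icc (0:ℝ) T,
      HasDerivAt (fun y => φxx y t) (φxxx x t) x)
    (hcont : ContinuousOn (fun p : ℝ × ℝ => φ p.1 p.2) (Icc 0 L ×ˢ Icc 0 T))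
    (hcontt : ContinuousOn (fun p : ℝ × ℝ => φt p.1 p.2) (Icc 0 L ×ˢ Icc 0 T))
    (hcontx : ContinuousOn (fun p : ℝ × ℝ => φx p.1 p.2) (Icc 0 L ×ˢ Icc 0 T))
    (hcontxx : ContinuousOn (fun p : ℝ × ℝ => φxx p.1 p.2) (Icc 0 L ×ˢ Icc 0 T))
    (hcontxxx : ContinuousOn (fun p : ℝ × ℝ => φxxx p.1 p.2) (Icc 0 L ×ˢ Icc 0 T))
    (hpde : ∀ x ∈ Icc (0:ℝ) L, ∀ t ∈ Icc (0:ℝ) T,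
      φt x t + φx x t + φxxx x t = 0)
    (hbc1 : ∀ t ∈ Icc (0:ℝ) T, φ L t = 0)
    (hbc2 : ∀ t ∈ Icc (0:ℝ) T, φx L t = 0)
    (hbc3 : ∀ t ∈ Icc (0:ℝ) T, φ 0 t + φxx 0 t = 0) :
    (∫ x in (0:ℝ)..L, (φ x 0) ^ 2)
      ≤ (1 / T) * (∫ t in (0:ℝ)..T, ∫ x in (0:ℝ)..L, (φ x t) ^ 2)
        + (∫ t in (0:ℝ)..T, (φx 0 t) ^ 2)
        + (∫ t in (0:ℝ)..T, (φ 0 t) ^ 2) := by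
  have h0L : (0:ℝ) ∈ Icc (0:ℝ) L := ⟨le_refl _, hL.le⟩
  have hLL : L ∈ Icc (0:ℝ) L := ⟨hL.le, le_refl _⟩
  -- x-slices: continuity in x for fixed t
  have sliceX : ∀ (f : ℝ → ℝ → ℝ), ContinuousOn (fun p : ℝ × ℝ => f p.1 p.2)
      (Icc 0 L ×ˢ Icc 0 T) → ∀ t ∈ Icc (0:ℝ) T, ContinuousOn (fun x => f x t) (Icc 0 L) := by
    intro f hf t ht
    exact hf.comp ((continuous_id.prodMk continuous_const).continuousOn)
      (fun x hx => Set.mk_mem_prod hx ht)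
  -- t-slices: continuity in t for fixed x
  have sliceT : ∀ (f : ℝ → ℝ → ℝ), ContinuousOn (fun p : ℝ × ℝ => f p.1 p.2)
      (Icc 0 L ×ˢ Icc 0 T) → ∀ x ∈ Icc (0:ℝ) L, ContinuousOn (fun t => f x t) (Icc 0 T) := by
    intro f hf x hx
    exact hf.comp ((continuous_const.prodMk continuous_id).continuousOn)
      (fun t ht => Set.mk_mem_prod hx ht)
  set E : ℝ → ℝ := fun t => ∫ x in (0:ℝ)..L, (φ x t) ^ 2 with hEdef
  set g : ℝ → ℝ := fun t => φ 0 t ^ 2 + φx 0 t ^ 2 with hgdef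
  have hgcont : ContinuousOn g (Icc 0 T) :=
    ((sliceT φ hcont 0 h0L).pow 2).add ((sliceT φx hcontx 0 h0L).pow 2)
  have hgint : ∀ a b : ℝ, a ∈ Icc (0:ℝ) T → b ∈ Icc (0:ℝ) T →
      IntervalIntegrable g volume a b := by
    intro a b ha hb
    exact (hgcont.mono (fun s hs => by
      constructor
      · exact le_trans (le_min ha.1 hb.1) hs.1
      · exact le_trans hs.2 (max_le ha.2 hb.2))).intervalIntegrable
  have hgnonneg : ∀ s : ℝ, 0 ≤ g s := fun s => add_nonneg (sq_nonneg _) (sq_nonneg _)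
  -- Step A: spatial integration by parts
  have keyA : ∀ t ∈ Icc (0:ℝ) T,
      (∫ x in (0:ℝ)..L, 2 * φ x t * φt x t) = -(g t) := by
    intro t ht
    have hderiv : ∀ x ∈ uIcc (0:ℝ) L,
        HasDerivAt (fun y => φ y t ^ 2 + 2 * φ y t * φxx y t - φx y t ^ 2)
          (-(2 * φ x t * φt x t)) x := by
      intro x hx
      rw [uIcc_of_le hL.le] at hx
      have hd1 := hφx x hx t ht
      have hd2 := hφxx x hx t ht
      have hd3 := hφxxx x hx t ht
      have hD := ((hd1.pow 2).add ((hd1.const_mul 2).mul hd3)).sub (hd2.pow 2)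
      have hD' : HasDerivAt (fun y => φ y t ^ 2 + 2 * φ y t * φxx y t - φx y t ^ 2) _ x := hD
      convert hD' using 1
      have hp := hpde x hx t ht
      have hpt : φt x t = -φx x t - φxxx x t := by linarith
      rw [hpt]; ring
    have hintg : IntervalIntegrable (fun x => -(2 * φ x t * φt x t)) volume 0 L := by
      apply ContinuousOn.intervalIntegrable
      rw [uIcc_of_le hL.le]
      exact (((continuousOn_const.mul (sliceX φ hcont t ht)).mul
        (sliceX φt hcontt t ht))).neg
    have hFTC := intervalIntegral.integral_eq_sub_of_hasDerivAt hderiv hintg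
    have hΨL : φ L t ^ 2 + 2 * φ L t * φxx L t - φx L t ^ 2 = 0 := by
      rw [hbc1 t ht, hbc2 t ht]; ring
    have hΨ0 : φ 0 t ^ 2 + 2 * φ 0 t * φxx 0 t - φx 0 t ^ 2 = -(g t) := by
      have h3 := hbc3 t ht
      have : φxx 0 t = -φ 0 t := by linarith
      rw [this, hgdef]; ring
    rw [intervalIntegral.integral_neg] at hFTC
    rw [hΨL, hΨ0] at hFTC
    linarith
  -- bound for the x-derivative integrand
  obtain ⟨C, hC⟩ := (isCompact_Icc.prod isCompact_Icc).exists_bound_of_continuousOn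
    ((continuousOn_const.mul hcont).mul hcontt :
      ContinuousOn (fun p : ℝ × ℝ => 2 * φ p.1 p.2 * φt p.1 p.2) (Icc 0 L ×ˢ Icc 0 T))
  -- measurability helper
  have hmeas : ∀ t ∈ Icc (0:ℝ) T, AEStronglyMeasurable (fun x => (φ x t) ^ 2)
      (volume.restrict (Set.uIoc (0:ℝ) L)) := by
    intro t ht
    rw [uIoc_of_le hL.le]
    exact (((sliceX φ hcont t ht).pow 2).mono Ioc_subset_Icc_self).aestronglyMeasurable
      measurableSet_Ioc
  have hmeas' : ∀ t ∈ Icc (0:ℝ) T, AEStronglyMeasurable (fun x => 2 * φ x t * φt x t)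
      (volume.restrict (Set.uIoc (0:ℝ) L)) := by
    intro t ht
    rw [uIoc_of_le hL.le]
    exact (((continuousOn_const.mul (sliceX φ hcont t ht)).mul
      (sliceX φt hcontt t ht)).mono Ioc_subset_Icc_self).aestronglyMeasurable measurableSet_Ioc
  -- Step B: continuity of E on [0,T]
  have hEcont : ContinuousOn E (Icc 0 T) := by
    intro t₀ ht₀
    obtain ⟨C₂, hC₂⟩ := (isCompact_Icc.prod isCompact_Icc).exists_bound_of_continuousOn
      ((hcont.mul hcont) :
        ContinuousOn (fun p : ℝ × ℝ => φ p.1 p.2 * φ p.1 p.2) (Icc 0 L ×ˢ Icc 0 T))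
    apply intervalIntegral.continuousWithinAt_of_dominated_interval
      (bound := fun _ => |C₂|)
    · exact eventually_mem_nhdsWithin.mono (fun t' ht' => hmeas t' ht')
    · apply eventually_mem_nhdsWithin.mono
      intro t' ht'
      apply Filter.Eventually.of_forall
      intro x hx
      rw [uIoc_of_le hL.le] at hx
      have := hC₂ (x, t') (Set.mk_mem_prod (Ioc_subset_Icc_self hx) ht')
      simp only [Real.norm_eq_abs] at this ⊢
      calc |φ x t' ^ 2| = |φ x t' * φ x t'| := by rw [sq]
        _ ≤ C₂ := this
        _ ≤ |C₂| := le_abs_self _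
    · exact intervalIntegrable_const
    · apply Filter.Eventually.of_forall
      intro x hx
      rw [uIoc_of_le hL.le] at hx
      exact (((sliceT φ hcont x (Ioc_subset_Icc_self hx)).pow 2) t₀ ht₀)
  -- Step C: derivative of E at interior times
  have hEderiv : ∀ t₀ ∈ Ioo (0:ℝ) T, HasDerivAt E (-(g t₀)) t₀ := by
    intro t₀ ht₀
    have ht₀' : t₀ ∈ Icc (0:ℝ) T := Ioo_subset_Icc_self ht₀
    set ε : ℝ := min t₀ (T - t₀) with hεdef
    have hε : 0 < ε := lt_min ht₀.1 (sub_pos.2 ht₀.2)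
    have hball : Metric.ball t₀ ε ⊆ Icc (0:ℝ) T := by
      intro s hs
      rw [Metric.mem_ball, Real.dist_eq, abs_lt] at hs
      constructor
      · have := min_le_left t₀ (T - t₀); linarith
      · have := min_le_right t₀ (T - t₀); linarith
    have hmain := intervalIntegral.hasDerivAt_integral_of_dominated_loc_of_deriv_le
      (F := fun t x => (φ x t) ^ 2) (F' := fun t x => 2 * φ x t * φt x t)
      (a := (0:ℝ)) (b := L) (μ := volume) (x₀ := t₀) (bound := fun _ => C) (Metric.ball_mem_nhds t₀ hε)
      ?_ ?_ ?_ ?_ ?_ ?_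
    · have := hmain.2
      rwa [keyA t₀ ht₀'] at this
    · exact (Filter.eventually_of_mem (Metric.ball_mem_nhds t₀ hε)
        (fun t' ht' => hmeas t' (hball ht')))
    · exact ContinuousOn.intervalIntegrable (by
        rw [uIcc_of_le hL.le]
        exact (sliceX φ hcont t₀ ht₀').pow 2)
    · exact hmeas' t₀ ht₀'
    · apply Filter.Eventually.of_forall
      intro x hx t ht
      rw [uIoc_of_le hL.le] at hx
      exact hC (x, t) (Set.mk_mem_prod (Ioc_subset_Icc_self hx) (hball ht))
    · exact intervalIntegrable_const
    · apply Filter.Eventually.of_forall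
      intro x hx t ht
      rw [uIoc_of_le hL.le] at hx
      have := (hφt x (Ioc_subset_Icc_self hx) t (hball ht)).pow 2
      have this' : HasDerivAt (fun s => φ x s ^ 2) _ t := this
      exact this'.congr_deriv (by ring)
  -- Step D: FTC in time: E 0 = E b + ∫₀ᵇ g
  have keyD : ∀ b ∈ Icc (0:ℝ) T, E 0 = E b + ∫ s in (0:ℝ)..b, g s := by
    intro b hb
    have hFTC := intervalIntegral.integral_eq_sub_of_hasDeriv_right_of_le hb.1
      (hEcont.mono (Icc_subset_Icc le_rfl hb.2))
      (fun s hs => (hEderiv s ⟨hs.1, lt_of_lt_of_le hs.2 hb.2⟩).hasDerivWithinAt)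
      (((hgint 0 b ⟨le_refl _, hT.le⟩ hb).neg))
    rw [intervalIntegral.integral_neg] at hFTC
    linarith
  -- Step E: monotonicity of ∫ g
  have keyE : ∀ b ∈ Icc (0:ℝ) T, (∫ s in (0:ℝ)..b, g s) ≤ ∫ s in (0:ℝ)..T, g s := by
    intro b hb
    have hsplit := intervalIntegral.integral_add_adjacent_intervals
      (hgint 0 b ⟨le_refl _, hT.le⟩ hb) (hgint b T hb ⟨hT.le, le_refl _⟩)
    have hnn : 0 ≤ ∫ s in b..T, g s :=
      intervalIntegral.integral_nonneg hb.2 (fun s _ => hgnonneg s)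
    linarith
  -- Step F: average over b ∈ [0,T]
  set Cg : ℝ := ∫ s in (0:ℝ)..T, g s with hCgdef
  have hEint : IntervalIntegrable E volume 0 T :=
    ContinuousOn.intervalIntegrable (by rwa [uIcc_of_le hT.le])
  have hmono : (∫ _ in (0:ℝ)..T, E 0) ≤ ∫ b in (0:ℝ)..T, (E b + Cg) := by
    apply intervalIntegral.integral_mono_on hT.le intervalIntegrable_const
      (hEint.add intervalIntegrable_const)
    intro b hb
    have h1 := keyD b hb
    have h2 := keyE b hb
    linarith
  rw [intervalIntegral.integral_const, intervalIntegral.integral_add hEint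
    intervalIntegrable_const, intervalIntegral.integral_const] at hmono
  simp only [smul_eq_mul, sub_zero] at hmono
  -- split ∫ g
  have hsplitg : Cg = (∫ t in (0:ℝ)..T, (φ 0 t) ^ 2) + ∫ t in (0:ℝ)..T, (φx 0 t) ^ 2 := by
    rw [hCgdef, hgdef]
    exact intervalIntegral.integral_add
      (ContinuousOn.intervalIntegrable (by
        rw [uIcc_of_le hT.le]; exact (sliceT φ hcont 0 h0L).pow 2))
      (ContinuousOn.intervalIntegrable (by
        rw [uIcc_of_le hT.le]; exact (sliceT φx hcontx 0 h0L).pow 2))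
  -- conclude
  have hIT : (∫ t in (0:ℝ)..T, ∫ x in (0:ℝ)..L, (φ x t) ^ 2) = ∫ b in (0:ℝ)..T, E b := rfl
  have hE0 : (∫ x in (0:ℝ)..L, (φ x 0) ^ 2) = E 0 := rfl
  rw [hIT, hE0]
  have hTE : T * E 0 ≤ (∫ b in (0:ℝ)..T, E b) + T * Cg := hmono
  have hfin : E 0 ≤ (1 / T) * (∫ b in (0:ℝ)..T, E b) + Cg := by
    rw [div_mul_eq_mul_div, one_mul]
    rw [← sub_le_iff_le_add]
    rw [le_div_iff₀ hT]
    nlinarith [hTE]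
  linarith [hfin, hsplitg.ge, hsplitg.le]
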